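/- Let n, k, and r be positive integers with r ≤ n and k < n. If k and r are both even, then there exists a k-regular simple graph G on n vertices together with a set S_r of r vertices such that the induced subgraph G[S_r] has a perfect matching. -/

import Mathlib

/-- Lemma: for positive n, k, r with r ≤ n, k < n, and k, r even, there is a k-regular
simple graph on n vertices with a set S_r of r vertices such that the induced subgraph
on S_r has a perfect matching. -/
theorem stmt10 (n k r : ℕ) (hn : 0 < n) (hk : 0 < k) (hr : 0 < r)
    (hrn : r ≤ n) (hkn : k < n) (hke : Even k) (hre : Even r) :
    ∃ (G : SimpleGraph (Fin n)) (S : Finset (Fin n)),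
      (∀ v, (G.neighborSet v).ncard = k) ∧ S.card = r ∧
      ∃ M : (G.induce (S : Set (Fin n))).Subgraph, M.IsPerfectMatching := by
  classical
  haveI : NeZero n := ⟨hn.ne'⟩
  obtain ⟨m, hm⟩ := hke
  have hm' : k = 2 * m := by omega
  have hm1 : 1 ≤ m := by omega
  have hmn : 2 * m < n := by omega
  -- the circulant graph with jumps 1, ..., m
  set G : SimpleGraph (Fin n) :=
    { Adj := fun v w => v ≠ w ∧ ((w - v).val ≤ m ∨ (v - w).val ≤ m)
      symm := by
        constructor
        intro v w h
        exact ⟨h.1.symm, h.2.symm⟩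
      loopless := by constructor; intro v h; exact h.1 rfl } with hG
  have hadj : ∀ v w : Fin n, G.Adj v w ↔
      (v ≠ w ∧ ((w - v).val ≤ m ∨ (v - w).val ≤ m)) := by
    intro v w; exact Iff.rfl
  -- the set S of the first r vertices
  have hS0 : ∀ i ∈ Finset.range r, i < n := fun i hi =>
    lt_of_lt_of_le (Finset.mem_range.mp hi) hrn
  set S : Finset (Fin n) := (Finset.range r).attachFin hS0 with hSdef
  have hmemS : ∀ v : Fin n, v ∈ S ↔ v.val < r := by
    intro v
    rw [hSdef, Finset.mem_attachFin, Finset.mem_range]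
  refine ⟨G, S, ?_, ?_, ?_⟩
  · -- regularity
    intro v
    have h1 : (G.neighborSet v).ncard
        = (Finset.univ.filter (fun w => G.Adj v w)).card := by
      rw [← Set.ncard_coe_finset]
      congr 1
      ext w
      simp [SimpleGraph.neighborSet]
    rw [h1]
    have h2 : (Finset.univ.filter (fun w => G.Adj v w)).card
        = ((Finset.range n).filter (fun i => (1 ≤ i ∧ i ≤ m) ∨ n - m ≤ i)).card := by
      apply Finset.card_nbij (fun w => (w - v).val)
      · intro w hw
        simp only [Finset.mem_coe, Finset.mem_filter, Finset.mem_univ, true_and] at hw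

        obtain ⟨hne, hcase⟩ := hw
        have hsub : (w - v).val = (n - v.val + w.val) % n := by
          rw [Fin.sub_def]
        have hsub' : (v - w).val = (n - w.val + v.val) % n := by
          rw [Fin.sub_def]
        have hv : v.val < n := v.isLt
        have hwv : w.val < n := w.isLt
        have hne' : v.val ≠ w.val := fun h => hne (Fin.ext h)
        have e1 : (w - v).val = (n - v.val + w.val) % n := hsub
        have e2 : (v - w).val = (n - w.val + v.val) % n := hsub'
        -- reduce the mods
        have m1 : (n - v.val + w.val) % n =
            if w.val < v.val then n - v.val + w.val else w.val - v.val := by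
          split
          · apply Nat.mod_eq_of_lt; omega
          · rw [show n - v.val + w.val = n + (w.val - v.val) by omega,
              Nat.add_mod_left]
            apply Nat.mod_eq_of_lt; omega
        have m2 : (n - w.val + v.val) % n =
            if v.val < w.val then n - w.val + v.val else v.val - w.val := by
          split
          · apply Nat.mod_eq_of_lt; omega
          · rw [show n - w.val + v.val = n + (v.val - w.val) by omega,
              Nat.add_mod_left]
            apply Nat.mod_eq_of_lt; omega
        simp only [Finset.mem_coe, Finset.mem_filter, Finset.mem_range]
        rw [e1]
        rw [e1, e2, m1, m2] at hcase
        rw [m1]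
        constructor
        · split <;> omega
        · split at hcase <;> split at hcase <;> split <;> omega
      · intro a _ b _ hab
        have h : a - v = b - v := Fin.ext hab
        exact sub_left_inj.mp h
      · intro i hi
        simp only [Finset.coe_filter, Finset.mem_range, Set.mem_setOf_eq] at hi
        obtain ⟨hin, hcond⟩ := hi
        refine ⟨v + ⟨i, hin⟩, ?_, ?_⟩
        · simp only [Finset.coe_filter, Finset.mem_univ, Set.mem_setOf_eq, true_and]

          have hsub : v + (⟨i, hin⟩ : Fin n) - v = ⟨i, hin⟩ := add_sub_cancel_left v _
          have hsub2 : v - (v + (⟨i, hin⟩ : Fin n)) = -(⟨i, hin⟩ : Fin n) :=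
            sub_add_cancel_left v _
          constructor
          · intro h
            have h0 : (⟨i, hin⟩ : Fin n) = 0 := left_eq_add.mp h
            have : i = 0 := by
              have := congrArg Fin.val h0
              simpa using this
            omega
          · rw [hsub, hsub2]
            have hneg : ((-(⟨i, hin⟩ : Fin n)) : Fin n).val = (n - i) % n :=
              by simp [Fin.neg_def]
            rcases hcond with h | h
            · left; simpa using h.2
            · right
              rw [hneg]
              have : (n - i) % n = n - i := Nat.mod_eq_of_lt (by omega)
              omega
        · simp only
          rw [add_sub_cancel_left]
    rw [h2]
    have h3 : (Finset.range n).filter (fun i => (1 ≤ i ∧ i ≤ m) ∨ n - m ≤ i)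
        = Finset.Icc 1 m ∪ Finset.Ico (n - m) n := by
      ext i
      simp only [Finset.mem_filter, Finset.mem_range, Finset.mem_union,
        Finset.mem_Icc, Finset.mem_Ico]
      omega
    rw [h3, Finset.card_union_of_disjoint, Nat.card_Icc, Nat.card_Ico]
    · omega
    · rw [Finset.disjoint_left]
      intro i hi hi'
      simp only [Finset.mem_Icc] at hi
      simp only [Finset.mem_Ico] at hi'
      omega
  · -- cardinality of S
    rw [hSdef, Finset.card_attachFin, Finset.card_range]
  · -- perfect matching on the induced subgraph
    obtain ⟨s, hs⟩ := hre
    have hs' : r = 2 * s := by omega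
    -- partner function on ℕ
    have adjG : ∀ x y : ↥(S : Set (Fin n)), (x : Fin n).val ≠ (y : Fin n).val →
        (x : Fin n).val / 2 = (y : Fin n).val / 2 →
        (G.induce (S : Set (Fin n))).Adj x y := by
      intro x y hne hdiv
      simp only [SimpleGraph.comap_adj, Function.Embedding.coe_subtype]

      set a := (x : Fin n).val with ha
      set b := (y : Fin n).val with hb
      have han : a < n := (x : Fin n).isLt
      have hbn : b < n := (y : Fin n).isLt
      refine ⟨fun h => hne (congrArg Fin.val h), ?_⟩
      have hsub : ((y : Fin n) - (x : Fin n)).val = (n - a + b) % n := by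
        rw [Fin.sub_def]
      have hsub' : ((x : Fin n) - (y : Fin n)).val = (n - b + a) % n := by
        rw [Fin.sub_def]
      have hcase : b = a + 1 ∨ a = b + 1 := by omega
      rcases hcase with h | h
      · left
        rw [hsub, h, show n - a + (a + 1) = n + 1 by omega, Nat.add_mod_left]
        rw [Nat.mod_eq_of_lt (by omega)]
        omega
      · right
        rw [hsub', h, show n - b + (b + 1) = n + 1 by omega, Nat.add_mod_left]
        rw [Nat.mod_eq_of_lt (by omega)]
        omega
    refine ⟨{ verts := Set.univ
              Adj := fun x y => x ≠ y ∧ (x : Fin n).val / 2 = (y : Fin n).val / 2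
              adj_sub := by
                intro x y h
                exact adjG x y
                  (fun hv => h.1 (Subtype.ext (Fin.ext hv))) h.2
              edge_vert := fun _ => trivial
              symm := by constructor; intro x y h; exact ⟨h.1.symm, h.2.symm⟩ }, ?_, ?_⟩
    · -- is a matching
      intro x _
      set a := (x : Fin n).val with ha
      have har : a < r := by
        have := x.2
        rw [Finset.mem_coe] at this
        have : (x : Fin n) ∈ S := this
        exact (hmemS _).mp this
      set b : ℕ := if a % 2 = 0 then a + 1 else a - 1 with hbdef
      have hbspec : (a % 2 = 0 ∧ b = a + 1) ∨ (a % 2 ≠ 0 ∧ b = a - 1) := by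
        rw [hbdef]; split
        · exact Or.inl ⟨by assumption, rfl⟩
        · exact Or.inr ⟨by assumption, rfl⟩
      have hbr : b < r := by omega
      have hbn : b < n := lt_of_lt_of_le hbr hrn
      have hbmem : (⟨b, hbn⟩ : Fin n) ∈ (S : Set (Fin n)) := by
        rw [Finset.mem_coe, hmemS]
        exact hbr
      refine ⟨⟨⟨b, hbn⟩, hbmem⟩, ⟨?_, ?_⟩, ?_⟩
      · intro h
        have h2 := congrArg (fun z : ↥(S : Set (Fin n)) => (z : Fin n).val) h
        simp only at h2
        omega
      · show a / 2 = b / 2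
        omega
      · intro y hy
        obtain ⟨hne, hdiv⟩ := hy
        have hyr : (y : Fin n).val < r := by
          have := y.2
          rw [Finset.mem_coe] at this
          exact (hmemS _).mp this
        have hvne : (y : Fin n).val ≠ a := by
          intro h
          exact hne (Subtype.ext (Fin.ext (by omega)))
        have hyb : (y : Fin n).val = b := by omega
        exact Subtype.ext (Fin.ext hyb)
    · -- is spanning
      intro v
      trivial
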